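/- Let D ⊆ ℝ^d be a uniform domain. Then the Lebesgue measure of ∂D is zero, and there exists c > 0 such that m(D ∩ B(x,r)) ≥ c r^d for all x in the closure of D and all 0 < r ≤ 1 (interior volume regularity). -/

import Mathlib

open MeasureTheory Metric Set

/-- A uniform domain in `ℝ^d` (Väisälä): an open connected set `D` such that for some
constant `C`, every pair of points `x, y ∈ D` is joined by a rectifiable curve `γ` in `D`
of length at most `C|x−y|`, along which `min{|x−z|, |z−y|} ≤ C · dist(z, ∂D)`. -/
def IsUniformDomain {d : ℕ} (D : Set (EuclideanSpace ℝ (Fin d))) : Prop :=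
  IsOpen D ∧ IsConnected D ∧ ∃ C : ℝ, 0 < C ∧
    ∀ x ∈ D, ∀ y ∈ D, ∃ γ : ℝ → EuclideanSpace ℝ (Fin d),
      ContinuousOn γ (Icc 0 1) ∧ γ 0 = x ∧ γ 1 = y ∧
      (∀ t ∈ Icc (0:ℝ) 1, γ t ∈ D) ∧
      eVariationOn γ (Icc 0 1) ≤ ENNReal.ofReal (C * dist x y) ∧
      ∀ t ∈ Icc (0:ℝ) 1,
        ENNReal.ofReal (min (dist x (γ t)) (dist (γ t) y))
          ≤ ENNReal.ofReal C * EMetric.infEdist (γ t) (frontier D)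

lemma ball_volume_aux {d : ℕ} (x : EuclideanSpace ℝ (Fin d)) {r : ℝ} (hr : 0 < r) :
    volume (ball x r)
      = ENNReal.ofReal (r ^ d) * volume (ball (0 : EuclideanSpace ℝ (Fin d)) 1) := by
  have h := Measure.addHaar_ball_mul_of_pos (volume : Measure (EuclideanSpace ℝ (Fin d))) x hr 1
  rw [mul_one] at h
  rw [h, finrank_euclideanSpace_fin]

lemma corkscrew_aux {d : ℕ} (D : Set (EuclideanSpace ℝ (Fin d)))
    (hD : IsUniformDomain D) :
    ∃ c : ℝ, 0 < c ∧ ∀ x ∈ closure D, ∀ r : ℝ, 0 < r → r ≤ 1 →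
      ENNReal.ofReal (c * r ^ d) ≤ volume (D ∩ ball x r) := by
  obtain ⟨hopen, hconn, C, hC, hcurve⟩ := hD
  obtain ⟨z₀, hz₀⟩ := hconn.nonempty
  obtain ⟨ρ₀, hρ₀pos, hρ₀⟩ := Metric.isOpen_iff.mp hopen z₀ hz₀
  set ι := volume (ball (0 : EuclideanSpace ℝ (Fin d)) 1) with hιdef
  have hιpos : 0 < ι := measure_ball_pos _ _ one_pos
  have hιtop : ι ≠ ⊤ := measure_ball_lt_top.ne
  have hιt : 0 < ι.toReal := ENNReal.toReal_pos hιpos.ne' hιtop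
  set κ : ℝ := min (1/(8*C)) (1/2) with hκdef
  have hκpos : 0 < κ := lt_min (by positivity) (by norm_num)
  set ρ₁ : ℝ := min ρ₀ 1 with hρ₁def
  have hρ₁pos : 0 < ρ₁ := lt_min hρ₀pos one_pos
  have hρ₁le : ρ₁ ≤ 1 := min_le_right _ _
  refine ⟨min (κ^d * ι.toReal) (ρ₁^d * ι.toReal), lt_min (by positivity) (by positivity), ?_⟩
  intro x hx r hr hr1
  by_cases hcase : ∃ y ∈ D, r/2 ≤ dist x y
  · -- there is a point of D far away from x
    obtain ⟨y, hy, hxy⟩ := hcase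
    obtain ⟨x', hx', hxx'⟩ := Metric.mem_closure_iff.mp hx (r/8) (by positivity)
    obtain ⟨γ, hγc, hγ0, hγ1, hγD, -, hγdist⟩ := hcurve x' hx' y hy
    have htri := dist_triangle x x' y
    have hx'y : 3*(r/8) ≤ dist x' y := by linarith
    have hf : ContinuousOn (fun t => dist x' (γ t)) (Icc 0 1) :=
      (continuous_const.dist continuous_id).comp_continuousOn hγc
    have h08 : r/8 ∈ Icc (dist x' (γ 0)) (dist x' (γ 1)) := by
      rw [hγ0, hγ1, dist_self]
      exact ⟨by positivity, by linarith⟩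
    obtain ⟨t, ht, hft⟩ := intermediate_value_Icc zero_le_one hf h08
    simp only at hft
    set z := γ t with hzdef
    have hzD : z ∈ D := hγD t ht
    have htri2 := dist_triangle x' z y
    have hdzy : r/8 ≤ dist z y := by
      rw [hft] at htri2
      linarith
    have hmin : ENNReal.ofReal (r/8) ≤ ENNReal.ofReal C * EMetric.infEdist z (frontier D) := by
      refine le_trans (ENNReal.ofReal_le_ofReal (le_min (le_of_eq hft.symm) hdzy)) ?_
      exact hγdist t ht
    have hinf : ENNReal.ofReal (r/(8*C)) ≤ EMetric.infEdist z (frontier D) := by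
      have h1 : r/(8*C) = (r/8)/C := by field_simp
      rw [h1, ENNReal.ofReal_div_of_pos hC,
        ENNReal.div_le_iff_le_mul (Or.inl (ENNReal.ofReal_pos.2 hC).ne')
          (Or.inl ENNReal.ofReal_ne_top), mul_comm]
      exact hmin
    set ρ : ℝ := r * κ with hρdef
    have hρpos : 0 < ρ := mul_pos hr hκpos
    have hρ8C : ρ ≤ r/(8*C) := by
      have : r * κ ≤ r * (1/(8*C)) :=
        mul_le_mul_of_nonneg_left (min_le_left _ _) hr.le
      calc ρ = r * κ := hρdef
        _ ≤ r * (1/(8*C)) := this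
        _ = r/(8*C) := by ring
    have hρ2 : ρ ≤ r/2 := by
      have : r * κ ≤ r * (1/2) :=
        mul_le_mul_of_nonneg_left (min_le_right _ _) hr.le
      calc ρ = r * κ := hρdef
        _ ≤ r * (1/2) := this
        _ = r/2 := by ring
    have hdisj : ∀ w ∈ ball z ρ, w ∉ frontier D := by
      intro w hw hwf
      have h1 : EMetric.infEdist z (frontier D) ≤ edist z w :=
        EMetric.infEdist_le_edist_of_mem hwf
      have h2 : edist z w < ENNReal.ofReal ρ := by
        rw [edist_comm]
        exact edist_lt_ofReal.2 hw
      have h3 : ENNReal.ofReal ρ ≤ ENNReal.ofReal (r/(8*C)) :=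
        ENNReal.ofReal_le_ofReal hρ8C
      exact lt_irrefl _ (((hinf.trans h1).trans_lt h2).trans_le h3)
    have hballD : ball z ρ ⊆ D := by
      refine IsPreconnected.subset_left_of_subset_union hopen
        isClosed_closure.isOpen_compl
        (disjoint_compl_right.mono_left subset_closure) ?_
        ⟨z, mem_ball_self hρpos, hzD⟩ (convex_ball z ρ).isPreconnected
      intro w hw
      by_cases hwc : w ∈ closure D
      · left
        have hwint : w ∈ interior D := by
          by_contra hwi
          exact hdisj w hw ⟨hwc, hwi⟩
        rwa [hopen.interior_eq] at hwint
      · right; exact hwc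
    have hballsub : ball z ρ ⊆ ball x r := by
      intro w hw
      rw [mem_ball] at hw ⊢
      have h1 : dist w x ≤ dist w z + dist z x' + dist x' x := dist_triangle4 w z x' x
      have h2 : dist z x' = r/8 := by rw [dist_comm]; exact hft
      have h3 : dist x' x < r/8 := by rwa [dist_comm]
      linarith
    calc ENNReal.ofReal (min (κ^d * ι.toReal) (ρ₁^d * ι.toReal) * r^d)
        ≤ ENNReal.ofReal (ρ^d * ι.toReal) := by
          apply ENNReal.ofReal_le_ofReal
          have h1 : min (κ^d * ι.toReal) (ρ₁^d * ι.toReal) * r^d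
              ≤ (κ^d * ι.toReal) * r^d :=
            mul_le_mul_of_nonneg_right (min_le_left _ _) (by positivity)
          have h2 : (κ^d * ι.toReal) * r^d = ρ^d * ι.toReal := by
            rw [hρdef, mul_pow]; ring
          linarith
      _ = ENNReal.ofReal (ρ^d) * ι := by
          rw [ENNReal.ofReal_mul (by positivity), ENNReal.ofReal_toReal hιtop]
      _ = volume (ball z ρ) := (ball_volume_aux z hρpos).symm
      _ ≤ volume (D ∩ ball x r) := measure_mono (subset_inter hballD hballsub)
  · -- D is entirely within distance r/2 of x
    push_neg at hcase
    have hDsub : D ⊆ ball x r := by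
      intro y hy
      rw [mem_ball, dist_comm]
      have := hcase y hy
      linarith
    rw [inter_eq_self_of_subset_left hDsub]
    have hrd : r^d ≤ 1 := pow_le_one₀ hr.le hr1
    calc ENNReal.ofReal (min (κ^d * ι.toReal) (ρ₁^d * ι.toReal) * r^d)
        ≤ ENNReal.ofReal (ρ₁^d * ι.toReal) := by
          apply ENNReal.ofReal_le_ofReal
          have h1 : min (κ^d * ι.toReal) (ρ₁^d * ι.toReal) * r^d
              ≤ (ρ₁^d * ι.toReal) * r^d :=
            mul_le_mul_of_nonneg_right (min_le_right _ _) (by positivity)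
          nlinarith [mul_pos (pow_pos hρ₁pos d) hιt]
      _ = ENNReal.ofReal (ρ₁^d) * ι := by
          rw [ENNReal.ofReal_mul (by positivity), ENNReal.ofReal_toReal hιtop]
      _ = volume (ball z₀ ρ₁) := (ball_volume_aux z₀ hρ₁pos).symm
      _ ≤ volume D := measure_mono ((ball_subset_ball (min_le_left _ _)).trans hρ₀)

/-- properties (2.1) of uniform domains. Let `D ⊆ ℝ^d` be a uniform
domain. Then the Lebesgue measure of `∂D` is zero, and there exists `c > 0` such that
`m(D ∩ B(x,r)) ≥ c r^d` for all `x` in the closure of `D` and all `0 < r ≤ 1`. -/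
theorem stmt_15 {d : ℕ} (D : Set (EuclideanSpace ℝ (Fin d)))
    (hD : IsUniformDomain D) :
    volume (frontier D) = 0 ∧
    ∃ c : ℝ, 0 < c ∧ ∀ x ∈ closure D, ∀ r : ℝ, 0 < r → r ≤ 1 →
      ENNReal.ofReal (c * r ^ d) ≤ volume (D ∩ ball x r) := by
  obtain ⟨c, hc, hvol⟩ := corkscrew_aux D hD
  refine ⟨?_, c, hc, hvol⟩
  set ιc := volume (closedBall (0 : EuclideanSpace ℝ (Fin d)) 1) with hιcdef
  have hιcpos : 0 < ιc := measure_closedBall_pos _ _ one_pos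
  have hιctop : ιc ≠ ⊤ := measure_closedBall_lt_top.ne
  set L : ENNReal := (ιc - ENNReal.ofReal c) / ιc with hLdef
  have hL : L < 1 := by
    rw [hLdef, ENNReal.div_lt_iff (Or.inl hιcpos.ne') (Or.inl hιctop), one_mul]
    exact ENNReal.sub_lt_self hιctop hιcpos.ne' (ENNReal.ofReal_pos.2 hc).ne'
  have key : ∀ x ∈ frontier D, ∀ r : ℝ, 0 < r → r ≤ 1 →
      volume (frontier D ∩ closedBall x r) / volume (closedBall x r) ≤ L := by
    intro x hx r hr hr1
    have hvol' := hvol x (frontier_subset_closure hx) r hr hr1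
    have hA : volume (closedBall x r) = ENNReal.ofReal (r^d) * ιc := by
      rw [Measure.addHaar_closedBall' volume x hr.le, finrank_euclideanSpace_fin, hιcdef]
    have hdisjoint : Disjoint (frontier D ∩ closedBall x r) (D ∩ ball x r) := by
      have hOpen : IsOpen D := hD.1
      have h1 : Disjoint (frontier D) D := by
        rw [hOpen.frontier_eq]
        exact disjoint_sdiff_self_left
      exact h1.mono inter_subset_left inter_subset_left
    have hsum : volume (frontier D ∩ closedBall x r) + volume (D ∩ ball x r)
        ≤ volume (closedBall x r) := by
      rw [← measure_union hdisjoint (hD.1.measurableSet.inter measurableSet_ball)]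
      exact measure_mono (union_subset inter_subset_right
        (inter_subset_right.trans ball_subset_closedBall))
    have hXle : volume (frontier D ∩ closedBall x r)
        ≤ (ιc - ENNReal.ofReal c) * ENNReal.ofReal (r^d) := by
      have h1 : volume (frontier D ∩ closedBall x r)
          ≤ volume (closedBall x r) - volume (D ∩ ball x r) :=
        ENNReal.le_sub_of_add_le_right ((measure_mono inter_subset_right).trans_lt measure_ball_lt_top).ne hsum
      refine h1.trans ?_
      rw [ENNReal.sub_mul (fun _ _ => ENNReal.ofReal_ne_top), hA]
      refine tsub_le_tsub (le_of_eq (mul_comm _ _)) ?_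
      rw [← ENNReal.ofReal_mul hc.le]
      exact hvol'
    rw [hA, ENNReal.div_le_iff_le_mul
      (Or.inl (by
        refine mul_ne_zero ?_ hιcpos.ne'
        exact (ENNReal.ofReal_pos.2 (by positivity)).ne'))
      (Or.inl (ENNReal.mul_ne_top ENNReal.ofReal_ne_top hιctop))]
    have heq : L * (ENNReal.ofReal (r^d) * ιc)
        = (ιc - ENNReal.ofReal c) * ENNReal.ofReal (r^d) := by
      rw [hLdef, mul_comm (ENNReal.ofReal (r^d)) ιc, ← mul_assoc,
        mul_comm ((ιc - ENNReal.ofReal c) / ιc) ιc,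
        ENNReal.mul_div_cancel hιcpos.ne' hιctop]
    rw [heq]
    exact hXle
  have hnot : ∀ x ∈ frontier D,
      ¬ Filter.Tendsto (fun r => volume (frontier D ∩ closedBall x r) / volume (closedBall x r))
        (nhdsWithin 0 (Ioi 0)) (nhds 1) := by
    intro x hx htend
    have h1 : ∀ᶠ r in nhdsWithin (0:ℝ) (Ioi 0),
        volume (frontier D ∩ closedBall x r) / volume (closedBall x r) ≤ L := by
      filter_upwards [Ioc_mem_nhdsGT_of_mem (⟨le_refl (0:ℝ), zero_lt_one⟩ : (0:ℝ) ∈ Ico (0:ℝ) 1)]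
        with r hr
      exact key x hx r hr.1 hr.2
    have h2 : ∀ᶠ r in nhdsWithin (0:ℝ) (Ioi 0),
        L < volume (frontier D ∩ closedBall x r) / volume (closedBall x r) :=
      htend.eventually (eventually_gt_nhds hL)
    obtain ⟨r, hr1, hr2⟩ := (h1.and h2).exists
    exact absurd hr1 (not_le.2 hr2)
  have hae := Besicovitch.ae_tendsto_measure_inter_div
    (volume : Measure (EuclideanSpace ℝ (Fin d))) (frontier D)
  rw [MeasureTheory.ae_iff] at hae
  have hsub : frontier D ⊆ {x | ¬ Filter.Tendsto
      (fun r => volume (frontier D ∩ closedBall x r) / volume (closedBall x r))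
      (nhdsWithin 0 (Ioi 0)) (nhds 1)} := fun x hx => hnot x hx
  have hle : volume (frontier D) ≤ 0 :=
    calc volume (frontier D) = volume.restrict (frontier D) (frontier D) :=
        (Measure.restrict_apply_self _ _).symm
      _ ≤ volume.restrict (frontier D) {x | ¬ Filter.Tendsto
          (fun r => volume (frontier D ∩ closedBall x r) / volume (closedBall x r))
          (nhdsWithin 0 (Ioi 0)) (nhds 1)} := measure_mono hsub
      _ = 0 := hae
  exact le_antisymm hle zero_le
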